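/- Let $c>0$ and let $X:(0,\infty)\to[0,\infty)$ satisfy $X'(t)\le 0$ and $\frac{d}{dt}(e^{ct}X(t))\le 0$ for $t>0$. If $Y_{p_0}(0)=-\int_0^\infty r^{p_0}dX(r)<\infty$ for some $p_0\ge 0$, then $\lim_{t\to\infty}e^{ct}X(t)=\lim_{p\to\infty}\frac{c^p Y_p(0)}{\Gamma(p+1)}$, where both limits exist. -/

import Mathlib

open MeasureTheory Set Filter
open scoped ENNReal Nat



lemma aux_rpow_div_Gamma (a : ℝ) (ha : 0 < a) :
    Tendsto (fun p : ℝ => a ^ p / Real.Gamma p) atTop (nhds 0) := by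
  have h1 : Tendsto (fun n : ℕ => max 1 a * (a * (a ^ n / n !))) atTop (nhds 0) := by
    simpa using ((FloorSemiring.tendsto_pow_div_factorial_atTop a).const_mul a).const_mul
      (max 1 a)
  have h2 : Tendsto (fun p : ℝ => max 1 a * (a * (a ^ (⌊p⌋₊ - 1) / (⌊p⌋₊ - 1)!)))
      atTop (nhds 0) :=
    h1.comp ((tendsto_sub_atTop_nat 1).comp tendsto_nat_floor_atTop)
  apply squeeze_zero' ?_ ?_ h2
  · filter_upwards [eventually_gt_atTop (0:ℝ)] with p hp
    have := Real.Gamma_pos_of_pos hp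
    positivity
  filter_upwards [eventually_ge_atTop (2:ℝ)] with p hp
  set n := ⌊p⌋₊ with hn
  have hn2 : 2 ≤ n := Nat.le_floor (by exact_mod_cast hp)
  have hnp : (n : ℝ) ≤ p := Nat.floor_le (by linarith)
  have hcast : ((n-1:ℕ):ℝ) = (n:ℝ) - 1 := by
    rw [Nat.cast_sub (by omega)]; simp
  have hΓ : Real.Gamma (n:ℝ) ≤ Real.Gamma p := by
    rcases eq_or_lt_of_le hnp with h | h
    · rw [h]
    · exact le_of_lt (Real.Gamma_strictMonoOn_Ici (by simp; exact_mod_cast hn2)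
        (by simp; linarith) h)
  have hΓn : Real.Gamma (n:ℝ) = ((n-1)! : ℝ) := by
    have h' : (n:ℝ) = ((n-1:ℕ):ℝ) + 1 := by rw [hcast]; ring
    rw [h', Real.Gamma_nat_eq_factorial]
  have hΓpos : 0 < Real.Gamma (n:ℝ) := by rw [hΓn]; positivity
  have h3 : a ^ (p - (n:ℝ)) ≤ max 1 a := by
    rcases le_total a 1 with h | h
    · calc a ^ (p - (n:ℝ)) ≤ 1 := Real.rpow_le_one ha.le h (by linarith)
        _ ≤ max 1 a := le_max_left _ _
    · calc a ^ (p - (n:ℝ)) ≤ a ^ (1:ℝ) := by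
            apply Real.rpow_le_rpow_of_exponent_le h
            have := Nat.lt_floor_add_one p
            linarith
        _ = a := Real.rpow_one a
        _ ≤ max 1 a := le_max_right _ _
  have hap : a ^ p ≤ a ^ (n:ℝ) * max 1 a := by
    have heq : a ^ p = a ^ (n:ℝ) * a ^ (p - n) := by
      rw [← Real.rpow_add ha]; ring_nf
    rw [heq]
    exact mul_le_mul_of_nonneg_left h3 (by positivity)
  have han : a ^ (n:ℝ) = a * a ^ (n - 1) := by
    rw [Real.rpow_natCast]
    conv_lhs => rw [show n = (n-1)+1 by omega]
    rw [pow_succ]; ring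
  calc a ^ p / Real.Gamma p ≤ (a ^ (n:ℝ) * max 1 a) / Real.Gamma (n:ℝ) :=
        div_le_div₀ (by positivity) hap hΓpos hΓ
    _ = max 1 a * (a * (a ^ (n - 1) / (n - 1)!)) := by
        rw [hΓn, han]; ring


lemma aux_gamma_lintegral (c : ℝ) (hc : 0 < c) (p : ℝ) (hp : 0 < p) :
    ∫⁻ x in Ioi (0:ℝ), ENNReal.ofReal (x ^ (p-1) * Real.exp (-(c*x)))
      = ENNReal.ofReal (Real.Gamma p / c ^ p) := by
  have hΓpos : 0 < Real.Gamma p := Real.Gamma_pos_of_pos hp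
  have h1 := ProbabilityTheory.lintegral_gammaPDF_eq_one (a := p) (r := c) hp hc
  have hsplit : (∫⁻ x, ProbabilityTheory.gammaPDF p c x)
      = ∫⁻ x in Ioi (0:ℝ), ProbabilityTheory.gammaPDF p c x := by
    rw [← lintegral_add_compl _ (measurableSet_Ici (a := (0:ℝ))), compl_Ici]
    have hIio : ∫⁻ x in Iio (0:ℝ), ProbabilityTheory.gammaPDF p c x = 0 := by
      rw [setLIntegral_congr_fun measurableSet_Iio
        (fun x (hx : x < 0) => ProbabilityTheory.gammaPDF_of_neg hx)]
      simp
    rw [hIio, add_zero, setLIntegral_congr (Ioi_ae_eq_Ici (a := (0:ℝ))).symm]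
  have h2 : ∫⁻ x in Ioi (0:ℝ), ProbabilityTheory.gammaPDF p c x
      = ENNReal.ofReal (c ^ p / Real.Gamma p)
        * ∫⁻ x in Ioi (0:ℝ), ENNReal.ofReal (x ^ (p-1) * Real.exp (-(c*x))) := by
    rw [← lintegral_const_mul' _ _ ENNReal.ofReal_ne_top]
    apply setLIntegral_congr_fun measurableSet_Ioi
    intro x hx
    rw [ProbabilityTheory.gammaPDF_of_nonneg (le_of_lt hx), mul_assoc,
      ENNReal.ofReal_mul (by positivity)]
  rw [hsplit, h2] at h1
  have hprod : ENNReal.ofReal (Real.Gamma p / c ^ p) * ENNReal.ofReal (c ^ p / Real.Gamma p)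
      = 1 := by
    rw [← ENNReal.ofReal_mul (by positivity)]
    have hcp : (0:ℝ) < c ^ p := Real.rpow_pos_of_pos hc p
    rw [show Real.Gamma p / c ^ p * (c ^ p / Real.Gamma p) = 1 by field_simp]
    simp
  calc ∫⁻ x in Ioi (0:ℝ), ENNReal.ofReal (x ^ (p-1) * Real.exp (-(c*x)))
      = (ENNReal.ofReal (Real.Gamma p / c ^ p) * ENNReal.ofReal (c ^ p / Real.Gamma p))
        * ∫⁻ x in Ioi (0:ℝ), ENNReal.ofReal (x ^ (p-1) * Real.exp (-(c*x))) := by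
        rw [hprod, one_mul]
    _ = ENNReal.ofReal (Real.Gamma p / c ^ p) := by rw [mul_assoc, h1, mul_one]

theorem stmt2 (c : ℝ) (hc : 0 < c) (X : ℝ → ℝ)
    (hXpos : ∀ t > 0, 0 ≤ X t)
    (hXdiff : ∀ t > 0, DifferentiableAt ℝ X t)
    (hX' : ∀ t > 0, deriv X t ≤ 0)
    (hXe : ∀ t > 0, deriv (fun s => Real.exp (c * s) * X s) t ≤ 0)
    (Y : ℝ → ℝ≥0∞)
    (hY : ∀ p > (0 : ℝ),
      Y p = ENNReal.ofReal p * ∫⁻ r in Ioi (0 : ℝ), ENNReal.ofReal (r ^ (p - 1) * X r))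
    (hY0 : Tendsto (fun t => ENNReal.ofReal (X t)) (nhdsWithin 0 (Ioi 0)) (nhds (Y 0)))
    (p₀ : ℝ) (hp₀ : 0 ≤ p₀) (hfin : Y p₀ < ∞) :
    ∃ L : ℝ, Tendsto (fun t => Real.exp (c * t) * X t) atTop (nhds L) ∧
      Tendsto (fun p => ENNReal.ofReal (c ^ p / Real.Gamma (p + 1)) * Y p) atTop
        (nhds (ENNReal.ofReal L)) := by
  have hΓ : ∀ p > (0:ℝ), 0 < Real.Gamma p := fun p hp => Real.Gamma_pos_of_pos hp
  set g : ℝ → ℝ := fun t => Real.exp (c * t) * X t with hgdef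
  -- differentiability and antitonicity of g and X on (0, ∞)
  have hgdiff : ∀ t ∈ Ioi (0:ℝ), DifferentiableAt ℝ g t := fun t ht =>
    ((differentiableAt_id.const_mul c).exp).mul (hXdiff t ht)
  have hganti : AntitoneOn g (Ioi 0) := by
    apply antitoneOn_of_deriv_nonpos (convex_Ioi 0)
    · exact fun t ht => (hgdiff t ht).continuousAt.continuousWithinAt
    · rw [interior_Ioi]; exact fun t ht => (hgdiff t ht).differentiableWithinAt
    · rw [interior_Ioi]; exact fun t ht => hXe t ht
  have hXanti : AntitoneOn X (Ioi 0) := by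
    apply antitoneOn_of_deriv_nonpos (convex_Ioi 0)
    · exact fun t ht => (hXdiff t ht).continuousAt.continuousWithinAt
    · rw [interior_Ioi]; exact fun t ht => (hXdiff t ht).differentiableWithinAt
    · rw [interior_Ioi]; exact fun t ht => hX' t ht
  have hgpos : ∀ t > (0:ℝ), 0 ≤ g t := fun t ht =>
    mul_nonneg (Real.exp_pos _).le (hXpos t ht)
  -- the limit L
  set G : ℝ → ℝ := fun t => g (max t 1) with hGdef
  have hmem : ∀ t : ℝ, max t 1 ∈ Ioi (0:ℝ) := fun t =>
    lt_of_lt_of_le one_pos (le_max_right t 1)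
  have hGanti : Antitone G := fun s t hst =>
    hganti (hmem s) (hmem t) (max_le_max hst le_rfl)
  have hGbdd : BddBelow (range G) := by
    refine ⟨0, ?_⟩
    rintro x ⟨t, rfl⟩
    exact hgpos _ (hmem t)
  set L : ℝ := ⨅ t, G t with hLdef
  have hGL : Tendsto G atTop (nhds L) := tendsto_atTop_ciInf hGanti hGbdd
  have hgL : Tendsto g atTop (nhds L) := by
    apply hGL.congr'
    filter_upwards [eventually_ge_atTop (1:ℝ)] with t ht
    simp only [hGdef, max_eq_left ht]
  have hL0 : 0 ≤ L := le_ciInf fun t => hgpos _ (hmem t)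
  have hLle : ∀ t > (0:ℝ), L ≤ g t := fun t ht =>
    le_trans (ciInf_le hGbdd t) (hganti ht (hmem t) (le_max_left t 1))
  refine ⟨L, hgL, ?_⟩
  -- notation for the integral
  set I : ℝ → ℝ≥0∞ := fun p => ∫⁻ r in Ioi (0:ℝ), ENNReal.ofReal (r ^ (p - 1) * X r)
    with hIdef
  have hA : ∀ p > (0:ℝ), ENNReal.ofReal (c ^ p / Real.Gamma (p + 1)) * Y p
      = ENNReal.ofReal (c ^ p / Real.Gamma p) * I p := by
    intro p hp
    rw [hY p hp, ← mul_assoc, ← ENNReal.ofReal_mul (by positivity)]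
    congr 2
    rw [Real.Gamma_add_one (ne_of_gt hp)]
    have h1 := hΓ p hp
    field_simp
  have hprod : ∀ p > (0:ℝ), ENNReal.ofReal (c ^ p / Real.Gamma p)
      * ENNReal.ofReal (Real.Gamma p / c ^ p) = 1 := by
    intro p hp
    have h1 := hΓ p hp
    have hcp : (0:ℝ) < c ^ p := Real.rpow_pos_of_pos hc p
    rw [← ENNReal.ofReal_mul (by positivity),
      show c ^ p / Real.Gamma p * (Real.Gamma p / c ^ p) = 1 by field_simp]
    simp
  -- lower bound: ofReal L ≤ A p for all p > 0
  have hXlow : ∀ r > (0:ℝ), L * Real.exp (-(c * r)) ≤ X r := by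
    intro r hr
    have h1 := hLle r hr
    have h2 : Real.exp (-(c*r)) * g r = X r := by
      simp only [hgdef, ← mul_assoc, ← Real.exp_add, neg_add_cancel, Real.exp_zero, one_mul]
    nlinarith [Real.exp_pos (-(c*r))]
  have hlow : ∀ p > (0:ℝ), ENNReal.ofReal L
      ≤ ENNReal.ofReal (c ^ p / Real.Gamma p) * I p := by
    intro p hp
    have hKey : ENNReal.ofReal L * ENNReal.ofReal (Real.Gamma p / c ^ p) ≤ I p := by
      rw [← aux_gamma_lintegral c hc p hp, ← lintegral_const_mul' _ _ ENNReal.ofReal_ne_top]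
      apply setLIntegral_mono' measurableSet_Ioi
      intro r hr
      rw [← ENNReal.ofReal_mul hL0]
      apply ENNReal.ofReal_le_ofReal
      calc L * (r ^ (p-1) * Real.exp (-(c*r))) = r ^ (p-1) * (L * Real.exp (-(c*r))) := by ring
        _ ≤ r ^ (p-1) * X r := by
            exact mul_le_mul_of_nonneg_left (hXlow r hr)
              (Real.rpow_nonneg (le_of_lt hr) _)
    calc ENNReal.ofReal L
        = ENNReal.ofReal (c ^ p / Real.Gamma p)
          * (ENNReal.ofReal L * ENNReal.ofReal (Real.Gamma p / c ^ p)) := by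
          rw [mul_comm (ENNReal.ofReal L), ← mul_assoc, hprod p hp, one_mul]
      _ ≤ _ := mul_le_mul_right hKey _
  set A : ℝ → ℝ≥0∞ := fun p => ENNReal.ofReal (c ^ p / Real.Gamma (p + 1)) * Y p with hAdef
  -- the finite integral near 0
  set q : ℝ := max p₀ 1 with hqdef
  have hq1 : 1 ≤ q := le_max_right _ _
  set B : ℝ≥0∞ := ∫⁻ r in Ioc (0:ℝ) 1, ENNReal.ofReal (r ^ (q - 1) * X r) with hBdef
  have hBfin : B < ∞ := by
    rcases eq_or_lt_of_le hp₀ with h0 | h0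
    · -- p₀ = 0 : X is bounded by (Y 0).toReal
      have hq : q = 1 := max_eq_right (by rw [← h0]; exact zero_le_one)
      have hM : ∀ r > (0:ℝ), X r ≤ (Y 0).toReal := by
        intro r hr
        have hev : ∀ᶠ t in nhdsWithin (0:ℝ) (Ioi 0),
            ENNReal.ofReal (X r) ≤ ENNReal.ofReal (X t) := by
          filter_upwards [self_mem_nhdsWithin,
            mem_nhdsWithin_of_mem_nhds (Iio_mem_nhds hr)] with t ht1 ht2
          exact ENNReal.ofReal_le_ofReal (hXanti ht1 hr (le_of_lt ht2))
        have := ge_of_tendsto hY0 hev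
        rw [← h0] at hfin
        exact (ENNReal.ofReal_le_iff_le_toReal hfin.ne).mp this
      calc B ≤ ∫⁻ _ in Ioc (0:ℝ) 1, ENNReal.ofReal (Y 0).toReal := by
            apply setLIntegral_mono' measurableSet_Ioc
            intro r hr
            apply ENNReal.ofReal_le_ofReal
            rw [hq]
            simpa using hM r hr.1
        _ = ENNReal.ofReal (Y 0).toReal * volume (Ioc (0:ℝ) 1) := setLIntegral_const _ _
        _ < ∞ := by
            rw [Real.volume_Ioc]
            exact ENNReal.mul_lt_top ENNReal.ofReal_lt_top ENNReal.ofReal_lt_top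
    · -- p₀ > 0
      have hIfin : I p₀ < ∞ := by
        rcases lt_or_ge (I p₀) ∞ with h | h
        · exact h
        · exfalso
          have hIt : I p₀ = ∞ := top_le_iff.mp h
          have hY' : Y p₀ = ENNReal.ofReal p₀ * I p₀ := hY p₀ h0
          rw [hY', hIt, ENNReal.mul_top
            (by simpa [ENNReal.ofReal_eq_zero] using h0)] at hfin
          exact (lt_irrefl _ hfin).elim
      calc B ≤ ∫⁻ r in Ioc (0:ℝ) 1, ENNReal.ofReal (r ^ (p₀ - 1) * X r) := by
            apply setLIntegral_mono' measurableSet_Ioc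
            intro r hr
            apply ENNReal.ofReal_le_ofReal
            apply mul_le_mul_of_nonneg_right _ (hXpos r hr.1)
            exact Real.rpow_le_rpow_of_exponent_ge hr.1 hr.2 (by simp [hqdef])
        _ ≤ I p₀ := lintegral_mono_set Ioc_subset_Ioi_self
        _ < ∞ := hIfin
  have hX1 : 0 ≤ X 1 := hXpos 1 one_pos
  -- upper bound on the limsup
  have h0a : Tendsto (fun p => ENNReal.ofReal (c ^ p / Real.Gamma p)) atTop (nhds 0) := by
    simpa using ENNReal.tendsto_ofReal (aux_rpow_div_Gamma c hc)
  have hup : ∀ T ≥ (1:ℝ), limsup A atTop ≤ ENNReal.ofReal (g T) := by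
    intro T hT
    have hT0 : (0:ℝ) < T := lt_of_lt_of_le one_pos hT
    have hcT : (0:ℝ) < c * T := mul_pos hc hT0
    -- the dominating function
    set F : ℝ → ℝ≥0∞ := fun p => ENNReal.ofReal (c ^ p / Real.Gamma p) * B
      + ENNReal.ofReal ((c * T) ^ p / Real.Gamma p * X 1) + ENNReal.ofReal (g T) with hFdef
    have hF : Tendsto F atTop (nhds (ENNReal.ofReal (g T))) := by
      have t1 : Tendsto (fun p => ENNReal.ofReal (c ^ p / Real.Gamma p) * B) atTop
          (nhds 0) := by
        simpa using ENNReal.Tendsto.mul_const h0a (Or.inr hBfin.ne)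
      have t2 : Tendsto (fun p => ENNReal.ofReal ((c * T) ^ p / Real.Gamma p * X 1)) atTop
          (nhds 0) := by
        have := ENNReal.tendsto_ofReal ((aux_rpow_div_Gamma (c*T) hcT).mul_const (X 1))
        simpa using this
      have := (t1.add t2).add (tendsto_const_nhds
        (x := ENNReal.ofReal (g T)) (f := atTop (α := ℝ)))
      simpa using this
    have hbound : ∀ᶠ p in atTop, A p ≤ F p := by
      filter_upwards [eventually_ge_atTop (max q 1)] with p hp
      have hp1 : (1:ℝ) ≤ p := le_trans (le_max_right q 1) hp
      have hpq : q ≤ p := le_trans (le_max_left q 1) hp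
      have hp0 : (0:ℝ) < p := lt_of_lt_of_le one_pos hp1
      have hΓp := hΓ p hp0
      -- splitting the integral
      have hsplit : I p = (∫⁻ r in Ioc (0:ℝ) 1, ENNReal.ofReal (r ^ (p - 1) * X r))
          + (∫⁻ r in Ioc (1:ℝ) T, ENNReal.ofReal (r ^ (p - 1) * X r))
          + (∫⁻ r in Ioi T, ENNReal.ofReal (r ^ (p - 1) * X r)) := by
        show (∫⁻ r in Ioi (0:ℝ), ENNReal.ofReal (r ^ (p - 1) * X r)) = _
        rw [← Set.Ioc_union_Ioi_eq_Ioi hT0.le, lintegral_union measurableSet_Ioi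
          Set.Ioc_disjoint_Ioi_same, ← Set.Ioc_union_Ioc_eq_Ioc zero_le_one hT,
          lintegral_union measurableSet_Ioc (Set.Ioc_disjoint_Ioc_of_le le_rfl)]
      have b1 : (∫⁻ r in Ioc (0:ℝ) 1, ENNReal.ofReal (r ^ (p - 1) * X r)) ≤ B := by
        apply setLIntegral_mono' measurableSet_Ioc
        intro r hr
        apply ENNReal.ofReal_le_ofReal
        apply mul_le_mul_of_nonneg_right _ (hXpos r hr.1)
        exact Real.rpow_le_rpow_of_exponent_ge hr.1 hr.2 (by linarith)
      have b2 : (∫⁻ r in Ioc (1:ℝ) T, ENNReal.ofReal (r ^ (p - 1) * X r))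
          ≤ ENNReal.ofReal (T ^ (p - 1) * X 1 * T) := by
        calc (∫⁻ r in Ioc (1:ℝ) T, ENNReal.ofReal (r ^ (p - 1) * X r))
            ≤ ∫⁻ _ in Ioc (1:ℝ) T, ENNReal.ofReal (T ^ (p - 1) * X 1) := by
              apply setLIntegral_mono' measurableSet_Ioc
              intro r hr
              have hr0 : (0:ℝ) < r := lt_trans one_pos hr.1
              apply ENNReal.ofReal_le_ofReal
              apply mul_le_mul (Real.rpow_le_rpow hr0.le hr.2 (by linarith))
                (hXanti (mem_Ioi.mpr one_pos) (mem_Ioi.mpr hr0) hr.1.le)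
                (hXpos r hr0) (Real.rpow_nonneg hT0.le _)
          _ = ENNReal.ofReal (T ^ (p - 1) * X 1) * volume (Ioc (1:ℝ) T) :=
              setLIntegral_const _ _
          _ ≤ ENNReal.ofReal (T ^ (p - 1) * X 1) * ENNReal.ofReal T := by
              rw [Real.volume_Ioc]
              exact mul_le_mul_right (ENNReal.ofReal_le_ofReal (by linarith)) _
          _ = ENNReal.ofReal (T ^ (p - 1) * X 1 * T) := by
              rw [← ENNReal.ofReal_mul (by positivity)]
      have b3 : (∫⁻ r in Ioi T, ENNReal.ofReal (r ^ (p - 1) * X r))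
          ≤ ENNReal.ofReal (g T) * ENNReal.ofReal (Real.Gamma p / c ^ p) := by
        calc (∫⁻ r in Ioi T, ENNReal.ofReal (r ^ (p - 1) * X r))
            ≤ ∫⁻ r in Ioi T, ENNReal.ofReal (g T)
              * ENNReal.ofReal (r ^ (p - 1) * Real.exp (-(c * r))) := by
              apply setLIntegral_mono' measurableSet_Ioi
              intro r hr
              have hr0 : (0:ℝ) < r := lt_trans hT0 hr
              rw [← ENNReal.ofReal_mul (hgpos T hT0)]
              apply ENNReal.ofReal_le_ofReal
              have hXr : X r ≤ Real.exp (-(c * r)) * g T := by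
                have h1 : g r ≤ g T := hganti hT0 hr0 (le_of_lt hr)
                have h2 : Real.exp (-(c * r)) * g r = X r := by
                  simp only [hgdef, ← mul_assoc, ← Real.exp_add, neg_add_cancel,
                    Real.exp_zero, one_mul]
                nlinarith [Real.exp_pos (-(c * r))]
              calc r ^ (p - 1) * X r ≤ r ^ (p - 1) * (Real.exp (-(c * r)) * g T) :=
                    mul_le_mul_of_nonneg_left hXr (Real.rpow_nonneg hr0.le _)
                _ = g T * (r ^ (p - 1) * Real.exp (-(c * r))) := by ring
          _ = ENNReal.ofReal (g T)
              * ∫⁻ r in Ioi T, ENNReal.ofReal (r ^ (p - 1) * Real.exp (-(c * r))) :=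
              lintegral_const_mul' _ _ ENNReal.ofReal_ne_top
          _ ≤ ENNReal.ofReal (g T)
              * ∫⁻ r in Ioi (0:ℝ), ENNReal.ofReal (r ^ (p - 1) * Real.exp (-(c * r))) :=
              mul_le_mul_right (lintegral_mono_set (Ioi_subset_Ioi hT0.le)) _
          _ = ENNReal.ofReal (g T) * ENNReal.ofReal (Real.Gamma p / c ^ p) := by
              rw [aux_gamma_lintegral c hc p hp0]
      -- combine
      have hcomb : A p ≤ ENNReal.ofReal (c ^ p / Real.Gamma p) * B
          + ENNReal.ofReal (c ^ p / Real.Gamma p) * ENNReal.ofReal (T ^ (p - 1) * X 1 * T)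
          + ENNReal.ofReal (g T) := by
        rw [hAdef]
        calc ENNReal.ofReal (c ^ p / Real.Gamma (p + 1)) * Y p
            = ENNReal.ofReal (c ^ p / Real.Gamma p) * I p := hA p hp0
          _ ≤ ENNReal.ofReal (c ^ p / Real.Gamma p)
              * (B + ENNReal.ofReal (T ^ (p - 1) * X 1 * T)
                + ENNReal.ofReal (g T) * ENNReal.ofReal (Real.Gamma p / c ^ p)) := by
              apply mul_le_mul_right
              rw [hsplit]
              exact add_le_add (add_le_add b1 b2) b3
          _ = ENNReal.ofReal (c ^ p / Real.Gamma p) * B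
              + ENNReal.ofReal (c ^ p / Real.Gamma p) * ENNReal.ofReal (T ^ (p - 1) * X 1 * T)
              + ENNReal.ofReal (c ^ p / Real.Gamma p)
                * (ENNReal.ofReal (g T) * ENNReal.ofReal (Real.Gamma p / c ^ p)) := by
              rw [mul_add, mul_add]
          _ = ENNReal.ofReal (c ^ p / Real.Gamma p) * B
              + ENNReal.ofReal (c ^ p / Real.Gamma p) * ENNReal.ofReal (T ^ (p - 1) * X 1 * T)
              + ENNReal.ofReal (g T) := by
              rw [mul_comm (ENNReal.ofReal (g T)), ← mul_assoc, hprod p hp0, one_mul]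
      refine le_trans hcomb ?_
      rw [hFdef]
      apply add_le_add_left
      apply add_le_add_right
      rw [← ENNReal.ofReal_mul (by positivity)]
      apply ENNReal.ofReal_le_ofReal
      apply le_of_eq
      have hTp : T ^ (p - 1) * T = T ^ p := by
        rw [show p = (p - 1) + 1 by ring, Real.rpow_add hT0, Real.rpow_one]
        ring_nf
      have hcTp : (c * T) ^ p = c ^ p * T ^ p := Real.mul_rpow hc.le hT0.le
      rw [hcTp, ← hTp]
      field_simp
    calc limsup A atTop ≤ limsup F atTop := limsup_le_limsup hbound
      _ = ENNReal.ofReal (g T) := hF.limsup_eq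
  -- conclude
  have hliminf : ENNReal.ofReal L ≤ liminf A atTop := by
    calc ENNReal.ofReal L = liminf (fun _ : ℝ => ENNReal.ofReal L) atTop :=
          (liminf_const _).symm
      _ ≤ liminf A atTop := by
          have hev : ∀ᶠ p in atTop, ENNReal.ofReal L ≤ A p := by
            filter_upwards [eventually_gt_atTop (0:ℝ)] with p hp
            rw [hAdef]
            calc ENNReal.ofReal L ≤ ENNReal.ofReal (c ^ p / Real.Gamma p) * I p := hlow p hp
              _ = ENNReal.ofReal (c ^ p / Real.Gamma (p + 1)) * Y p := (hA p hp).symm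
          exact liminf_le_liminf hev
  have hlimsup : limsup A atTop ≤ ENNReal.ofReal L := by
    apply ge_of_tendsto (ENNReal.tendsto_ofReal hgL)
    filter_upwards [eventually_ge_atTop (1:ℝ)] with T hT
    exact hup T hT
  exact tendsto_of_le_liminf_of_limsup_le hliminf hlimsup
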